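/- Let C_{2t,Δ} be the multigraph obtained from the cycle on 2t vertices by replacing the edges alternately with ⌊Δ/2⌋ and ⌈Δ/2⌉ parallel edges. Then for two antipodal vertices x, y of the cycle, the number of shortest x–y paths in C_{2t,Δ} equals 2 · (⌊Δ/2⌋ · ⌈Δ/2⌉)^(t/2) when t is even, and (⌊Δ/2⌋ + ⌈Δ/2⌉) · (⌊Δ/2⌋ · ⌈Δ/2⌉)^((t-1)/2) when t is odd. -/

import Mathlib

/-- A multigraph on vertex type `V` with edge type `E`: each edge has an
unordered pair of endpoints (parallel edges and loops are allowed). -/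
structure Multigraph (V : Type) (E : Type) where
  ends : E → Sym2 V

namespace Multigraph

variable {V E : Type}

/-- A walk of length `n` from `x` to `y` in a multigraph, recorded by its
sequence of vertices and edges. -/
@[ext]
structure Walk (G : Multigraph V E) (x y : V) (n : ℕ) where
  vert : Fin (n + 1) → V
  edge : Fin n → E
  vert_zero : vert 0 = x
  vert_last : vert (Fin.last n) = y
  ends_eq : ∀ i : Fin n, G.ends (edge i) = s(vert i.castSucc, vert i.succ)

/-- The graph distance between two vertices (junk value `0` by `sInf` of `∅`
if they are not connected). -/
noncomputable def dist (G : Multigraph V E) (x y : V) : ℕ :=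
  sInf {n | Nonempty (G.Walk x y n)}

/-- The degree of a vertex: the number of edges incident to it. -/
noncomputable def degree (G : Multigraph V E) (v : V) : ℕ :=
  Nat.card {e : E // v ∈ G.ends e}

/-- The number of shortest paths between `x` and `y`: the number of walks
whose length is the distance (such walks are automatically paths). -/
noncomputable def numShortestPaths (G : Multigraph V E) (x y : V) : ℕ :=
  Nat.card (G.Walk x y (G.dist x y))

/-- Distance from a vertex to an edge: the least distance to an endpoint. -/
noncomputable def distToEdge (G : Multigraph V E) (x : V) (e : E) : ℕ :=
  sInf {d | ∃ v ∈ G.ends e, G.dist x v = d}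

noncomputable instance {G : Multigraph V E} {x y : V} {n : ℕ} [Fintype V] [Fintype E] :
    Fintype (G.Walk x y n) := by
  classical
  exact Fintype.ofInjective (fun w => (w.vert, w.edge)) (fun a b h => by
    cases a; cases b; simp_all)

end Multigraph

/-- Bundle size on the i-th edge of the cycle: alternately ⌊Δ/2⌋ and ⌈Δ/2⌉. -/
def bundleSize (Δ t : ℕ) (i : ZMod (2 * t)) : ℕ :=
  if i.val % 2 = 0 then Δ / 2 else (Δ + 1) / 2

/-- The multigraph C_{2t,Δ}: the cycle on 2t vertices with the i-th edge replaced
by a bundle of `bundleSize Δ t i` parallel edges. -/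
def cycleMultigraph (Δ t : ℕ) :
    Multigraph (ZMod (2 * t)) (Σ i : ZMod (2 * t), Fin (bundleSize Δ t i)) where
  ends e := s(e.1, e.1 + 1)


open Finset

namespace CycleAux

open Multigraph

variable (Δ t : ℕ)

lemma telescope {M : Type} [AddCommGroup M] {n : ℕ} (g : Fin (n+1) → M) :
    ∑ i : Fin n, (g i.succ - g i.castSucc) = g (Fin.last n) - g 0 := by
  induction n with
  | zero => simp
  | succ n ih =>
    rw [Fin.sum_univ_castSucc]
    have h := ih (fun k => g k.castSucc)
    simp only [Fin.succ_castSucc] at h ⊢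
    rw [h]
    simp [Fin.succ_last]

lemma step_cases {x y : ZMod (2*t)} {n : ℕ}
    (w : (cycleMultigraph Δ t).Walk x y n) (i : Fin n) :
    (w.vert i.succ = w.vert i.castSucc + 1 ∧ (w.edge i).1 = w.vert i.castSucc) ∨
    (w.vert i.castSucc = w.vert i.succ + 1 ∧ (w.edge i).1 = w.vert i.succ) := by
  have h := w.ends_eq i
  simp only [cycleMultigraph] at h
  rw [Sym2.eq_iff] at h
  rcases h with ⟨h1, h2⟩ | ⟨h1, h2⟩
  · exact Or.inl ⟨by rw [← h2, h1], h1⟩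
  · exact Or.inr ⟨by rw [← h2, h1], h1⟩

/-- the ±1 step of a walk -/
def eps {x y : ZMod (2*t)} {n : ℕ} (w : (cycleMultigraph Δ t).Walk x y n) (i : Fin n) : ℤ :=
  if w.vert i.succ = w.vert i.castSucc + 1 then 1 else -1

lemma eps_one_or {x y : ZMod (2*t)} {n : ℕ} (w : (cycleMultigraph Δ t).Walk x y n) (i : Fin n) :
    eps Δ t w i = 1 ∨ eps Δ t w i = -1 := by
  unfold eps; split <;> simp

lemma eps_cast {x y : ZMod (2*t)} {n : ℕ} (w : (cycleMultigraph Δ t).Walk x y n) (i : Fin n) :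
    ((eps Δ t w i : ℤ) : ZMod (2*t)) = w.vert i.succ - w.vert i.castSucc := by
  unfold eps
  split
  · next h => rw [h]; push_cast; ring
  · next h =>
      rcases step_cases Δ t w i with ⟨h1, _⟩ | ⟨h1, _⟩
      · exact absurd h1 h
      · rw [h1]; push_cast; ring

lemma sum_eps {x y : ZMod (2*t)} {n : ℕ} (w : (cycleMultigraph Δ t).Walk x y n) :
    ((∑ i, eps Δ t w i : ℤ) : ZMod (2*t)) = y - x := by
  push_cast
  rw [Finset.sum_congr rfl (fun i _ => eps_cast Δ t w i), telescope,
    w.vert_zero, w.vert_last]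

lemma abs_sum_eps_le {x y : ZMod (2*t)} {n : ℕ} (w : (cycleMultigraph Δ t).Walk x y n) :
    |∑ i, eps Δ t w i| ≤ (n : ℤ) := by
  calc |∑ i, eps Δ t w i| ≤ ∑ i, |eps Δ t w i| := Finset.abs_sum_le_sum_abs _ _
  _ ≤ ∑ _i : Fin n, 1 := Finset.sum_le_sum (fun i _ => by
      rcases eps_one_or Δ t w i with h | h <;> simp [h])
  _ = n := by simp

lemma dvd_sum_eps (ht : 1 ≤ t) {n : ℕ}
    (w : (cycleMultigraph Δ t).Walk (0 : ZMod (2*t)) (t : ZMod (2*t)) n) :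
    ∃ k : ℤ, ∑ i, eps Δ t w i = t + 2 * t * k := by
  haveI : NeZero (2*t) := ⟨by omega⟩
  have h1 : ((∑ i, eps Δ t w i - t : ℤ) : ZMod (2*t)) = 0 := by
    rw [Int.cast_sub, sum_eps Δ t w]
    push_cast
    ring
  rw [ZMod.intCast_zmod_eq_zero_iff_dvd] at h1
  obtain ⟨k, hk⟩ := h1
  exact ⟨k, by push_cast at hk; linarith⟩

lemma walk_length_ge (ht : 1 ≤ t) {n : ℕ}
    (w : (cycleMultigraph Δ t).Walk (0 : ZMod (2*t)) (t : ZMod (2*t)) n) : t ≤ n := by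
  obtain ⟨k, hk⟩ := dvd_sum_eps Δ t ht w
  have h2 := abs_le.mp (abs_sum_eps_le Δ t w)
  by_contra hc
  push_neg at hc
  have ht' : (1 : ℤ) ≤ t := by exact_mod_cast ht
  have hn : (n : ℤ) < t := by exact_mod_cast hc
  rcases le_or_gt 0 k with hk0 | hk0
  · have : 0 ≤ 2 * (t:ℤ) * k := by positivity
    linarith
  · have hk1 : k ≤ -1 := by omega
    have : 2 * (t:ℤ) * k ≤ 2 * (t:ℤ) * (-1) := by
      apply mul_le_mul_of_nonneg_left hk1
      linarith
    linarith

lemma forward_or_backward (ht : 1 ≤ t)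
    (w : (cycleMultigraph Δ t).Walk (0 : ZMod (2*t)) (t : ZMod (2*t)) t) :
    (∀ i : Fin t, w.vert i.succ = w.vert i.castSucc + 1) ∨
    (∀ i : Fin t, w.vert i.castSucc = w.vert i.succ + 1) := by
  obtain ⟨k, hk⟩ := dvd_sum_eps Δ t ht w
  have h2 := abs_le.mp (abs_sum_eps_le Δ t w)
  have ht' : (1 : ℤ) ≤ t := by exact_mod_cast ht
  have hk01 : k = 0 ∨ k = -1 := by
    rcases le_or_gt 0 k with hk0 | hk0
    · left
      by_contra hne
      have hk1 : 1 ≤ k := by omega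
      have : 2 * (t:ℤ) * 1 ≤ 2 * (t:ℤ) * k := by
        apply mul_le_mul_of_nonneg_left hk1; linarith
      linarith
    · right
      by_contra hne
      have hk1 : k ≤ -2 := by omega
      have : 2 * (t:ℤ) * k ≤ 2 * (t:ℤ) * (-2) := by
        apply mul_le_mul_of_nonneg_left hk1; linarith
      linarith
  rcases hk01 with h | h
  · left
    have hS : ∑ i, eps Δ t w i = t := by rw [hk, h]; ring
    have hz : ∑ i : Fin t, (1 - eps Δ t w i) = 0 := by
      rw [Finset.sum_sub_distrib, hS]; simp
    have hall := (Finset.sum_eq_zero_iff_of_nonneg (fun i _ => by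
      rcases eps_one_or Δ t w i with h | h <;> simp [h] <;> norm_num)).mp hz
    intro i
    have hi := hall i (Finset.mem_univ i)
    have : eps Δ t w i = 1 := by linarith
    unfold eps at this
    by_contra hc
    rw [if_neg hc] at this
    norm_num at this
  · right
    have hS : ∑ i, eps Δ t w i = -t := by rw [hk, h]; ring
    have hz : ∑ i : Fin t, (eps Δ t w i + 1) = 0 := by
      rw [Finset.sum_add_distrib, hS]; simp
    have hall := (Finset.sum_eq_zero_iff_of_nonneg (fun i _ => by
      rcases eps_one_or Δ t w i with h | h <;> simp [h] <;> norm_num)).mp hz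
    intro i
    have hi := hall i (Finset.mem_univ i)
    have heps : eps Δ t w i = -1 := by linarith
    have hne : ¬ (w.vert i.succ = w.vert i.castSucc + 1) := by
      intro hc
      unfold eps at heps
      rw [if_pos hc] at heps
      norm_num at heps
    rcases step_cases Δ t w i with ⟨h1, _⟩ | ⟨h1, _⟩
    · exact absurd h1 hne
    · exact h1

lemma two_ne_zero' (ht2 : 2 ≤ t) : (2 : ZMod (2*t)) ≠ 0 := by
  haveI : NeZero (2*t) := ⟨by omega⟩
  intro h
  have : ((2 : ℕ) : ZMod (2*t)) = 0 := by exact_mod_cast h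
  rw [ZMod.natCast_eq_zero_iff] at this
  have := Nat.le_of_dvd (by norm_num) this
  omega

lemma edge_fst_of_forward (ht2 : 2 ≤ t) {x y : ZMod (2*t)} {n : ℕ}
    (w : (cycleMultigraph Δ t).Walk x y n) (i : Fin n)
    (hf : w.vert i.succ = w.vert i.castSucc + 1) :
    (w.edge i).1 = w.vert i.castSucc := by
  rcases step_cases Δ t w i with ⟨_, h2⟩ | ⟨h1, h2⟩
  · exact h2
  · exfalso
    have h : w.vert i.castSucc = w.vert i.castSucc + 2 := by
      calc w.vert i.castSucc = w.vert i.succ + 1 := h1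
      _ = w.vert i.castSucc + 1 + 1 := by rw [hf]
      _ = w.vert i.castSucc + 2 := by ring
    exact two_ne_zero' t ht2 (left_eq_add.mp h)

lemma edge_fst_of_backward (ht2 : 2 ≤ t) {x y : ZMod (2*t)} {n : ℕ}
    (w : (cycleMultigraph Δ t).Walk x y n) (i : Fin n)
    (hb : w.vert i.castSucc = w.vert i.succ + 1) :
    (w.edge i).1 = w.vert i.succ := by
  rcases step_cases Δ t w i with ⟨h1, h2⟩ | ⟨_, h2⟩
  · exfalso
    have h : w.vert i.succ = w.vert i.succ + 2 := by
      calc w.vert i.succ = w.vert i.castSucc + 1 := h1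
      _ = w.vert i.succ + 1 + 1 := by rw [hb]
      _ = w.vert i.succ + 2 := by ring
    exact two_ne_zero' t ht2 (left_eq_add.mp h)
  · exact h2

lemma vert_eq_of_forward {x y : ZMod (2*t)} {n : ℕ}
    (w : (cycleMultigraph Δ t).Walk x y n)
    (hf : ∀ i : Fin n, w.vert i.succ = w.vert i.castSucc + 1) :
    ∀ k : Fin (n+1), w.vert k = x + (k.val : ZMod (2*t)) := by
  have key : ∀ j : ℕ, ∀ hj : j < n + 1, w.vert ⟨j, hj⟩ = x + (j : ZMod (2*t)) := by
    intro j
    induction j with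
    | zero =>
        intro hj
        have h0 : (⟨0, hj⟩ : Fin (n+1)) = 0 := by ext; simp
        rw [h0, w.vert_zero]; simp
    | succ j ih =>
        intro hj
        have hjn : j < n := by omega
        have hs : (⟨j+1, hj⟩ : Fin (n+1)) = (⟨j, hjn⟩ : Fin n).succ := by ext; simp
        have hcs : (⟨j, by omega⟩ : Fin (n+1)) = (⟨j, hjn⟩ : Fin n).castSucc := by ext; simp
        rw [hs, hf ⟨j, hjn⟩, ← hcs, ih (by omega)]
        push_cast; ring
  intro k
  have := key k.val k.isLt
  simpa using this

lemma vert_eq_of_backward {x y : ZMod (2*t)} {n : ℕ}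
    (w : (cycleMultigraph Δ t).Walk x y n)
    (hb : ∀ i : Fin n, w.vert i.castSucc = w.vert i.succ + 1) :
    ∀ k : Fin (n+1), w.vert k = x - (k.val : ZMod (2*t)) := by
  have key : ∀ j : ℕ, ∀ hj : j < n + 1, w.vert ⟨j, hj⟩ = x - (j : ZMod (2*t)) := by
    intro j
    induction j with
    | zero =>
        intro hj
        have h0 : (⟨0, hj⟩ : Fin (n+1)) = 0 := by ext; simp
        rw [h0, w.vert_zero]; simp
    | succ j ih =>
        intro hj
        have hjn : j < n := by omega
        have hs : (⟨j+1, hj⟩ : Fin (n+1)) = (⟨j, hjn⟩ : Fin n).succ := by ext; simp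
        have hcs : (⟨j, by omega⟩ : Fin (n+1)) = (⟨j, hjn⟩ : Fin n).castSucc := by ext; simp
        have := hb ⟨j, hjn⟩
        rw [← hcs, ih (by omega)] at this
        have h2 : w.vert (⟨j, hjn⟩ : Fin n).succ = x - (j : ZMod (2*t)) - 1 :=
          eq_sub_of_add_eq this.symm
        rw [hs, h2]
        push_cast; ring
  intro k
  have := key k.val k.isLt
  simpa using this

lemma neg_rep (ht : 1 ≤ t) {i : ℕ} (hi : i < 2*t) :
    ((2*t - (i+1) : ℕ) : ZMod (2*t)) = -((i : ZMod (2*t)) + 1) := by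
  apply eq_neg_of_add_eq_zero_left
  have h : ((2*t - (i+1)) + (i+1) : ℕ) = 2*t := by omega
  calc ((2*t - (i+1) : ℕ) : ZMod (2*t)) + ((i : ZMod (2*t)) + 1)
      = (((2*t - (i+1)) + (i+1) : ℕ) : ZMod (2*t)) := by push_cast; ring
    _ = ((2*t : ℕ) : ZMod (2*t)) := by rw [h]
    _ = 0 := ZMod.natCast_self _

/-- The i-th forward bundle size and backward bundle size, as pi types. -/
abbrev FPi : Type := ∀ i : Fin t, Fin (bundleSize Δ t ((i.val : ℕ) : ZMod (2*t)))
abbrev BPi : Type := ∀ i : Fin t, Fin (bundleSize Δ t ((2*t - (i.val+1) : ℕ) : ZMod (2*t)))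

def fwWalk (f : FPi Δ t) :
    (cycleMultigraph Δ t).Walk (0 : ZMod (2*t)) (t : ZMod (2*t)) t where
  vert k := ((k.val : ℕ) : ZMod (2*t))
  edge i := ⟨((i.val : ℕ) : ZMod (2*t)), f i⟩
  vert_zero := by simp
  vert_last := by simp
  ends_eq i := by
    simp only [cycleMultigraph, Fin.coe_castSucc, Fin.val_succ]
    push_cast
    rfl

lemma fwWalk_forward (f : FPi Δ t) :
    ∀ i : Fin t, (fwWalk Δ t f).vert i.succ = (fwWalk Δ t f).vert i.castSucc + 1 := by
  intro i
  show ((i.succ.val : ℕ) : ZMod (2*t)) = ((i.castSucc.val : ℕ) : ZMod (2*t)) + 1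
  simp [Fin.val_succ]

def bwWalk (ht : 1 ≤ t) (g : BPi Δ t) :
    (cycleMultigraph Δ t).Walk (0 : ZMod (2*t)) (t : ZMod (2*t)) t where
  vert k := -((k.val : ℕ) : ZMod (2*t))
  edge i := ⟨((2*t - (i.val+1) : ℕ) : ZMod (2*t)), g i⟩
  vert_zero := by simp
  vert_last := by
    show -((t : ℕ) : ZMod (2*t)) = (t : ZMod (2*t))
    apply neg_eq_of_add_eq_zero_left
    calc (t : ZMod (2*t)) + (t : ZMod (2*t)) = ((2*t : ℕ) : ZMod (2*t)) := by push_cast; ring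
    _ = 0 := ZMod.natCast_self _
  ends_eq i := by
    simp only [cycleMultigraph, Fin.coe_castSucc, Fin.val_succ]
    rw [neg_rep t ht (by omega : i.val < 2*t)]
    rw [Sym2.eq_swap]
    push_cast
    congr 1
    ring

lemma bwWalk_backward (ht : 1 ≤ t) (g : BPi Δ t) :
    ∀ i : Fin t, (bwWalk Δ t ht g).vert i.castSucc = (bwWalk Δ t ht g).vert i.succ + 1 := by
  intro i
  show -((i.castSucc.val : ℕ) : ZMod (2*t)) = -((i.succ.val : ℕ) : ZMod (2*t)) + 1
  simp only [Fin.coe_castSucc, Fin.val_succ]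
  push_cast
  ring

/-- forward predicate -/
def Fwd {n : ℕ} (w : (cycleMultigraph Δ t).Walk (0 : ZMod (2*t)) (t : ZMod (2*t)) n) : Prop :=
  ∀ i : Fin n, w.vert i.succ = w.vert i.castSucc + 1

lemma not_fwd_bwWalk (ht2 : 2 ≤ t) (g : BPi Δ t) : ¬ Fwd Δ t (bwWalk Δ t (by omega) g) := by
  intro h
  have h1 := bwWalk_backward Δ t (by omega) g ⟨0, by omega⟩
  have h2 := h ⟨0, by omega⟩
  rw [h2] at h1
  have h3 := left_eq_add.mp (by
    calc (bwWalk Δ t (by omega : 1 ≤ t) g).vert (⟨0, by omega⟩ : Fin t).castSucc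
        = (bwWalk Δ t (by omega) g).vert (⟨0, by omega⟩ : Fin t).castSucc + 1 + 1 := h1
      _ = (bwWalk Δ t (by omega) g).vert (⟨0, by omega⟩ : Fin t).castSucc + 2 := by ring)
  exact two_ne_zero' t ht2 h3

noncomputable def equivF (ht2 : 2 ≤ t) :
    {w : (cycleMultigraph Δ t).Walk (0 : ZMod (2*t)) (t : ZMod (2*t)) t // Fwd Δ t w} ≃
      FPi Δ t where
  toFun w := fun i => Fin.cast (congrArg (bundleSize Δ t) (by
    rw [edge_fst_of_forward Δ t ht2 w.1 i (w.2 i),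
      vert_eq_of_forward Δ t w.1 w.2 i.castSucc]
    simp)) ((w.1.edge i).2)
  invFun f := ⟨fwWalk Δ t f, fwWalk_forward Δ t f⟩
  left_inv := by
    rintro ⟨w, hw⟩
    apply Subtype.ext
    apply Multigraph.Walk.ext
    · funext k
      show ((k.val : ℕ) : ZMod (2*t)) = w.vert k
      rw [vert_eq_of_forward Δ t w hw k]
      simp
    · funext i
      show (⟨((i.val : ℕ) : ZMod (2*t)), _⟩ : Σ j : ZMod (2*t), Fin (bundleSize Δ t j))
          = w.edge i
      have hfst : (w.edge i).1 = ((i.val : ℕ) : ZMod (2*t)) := by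
        rw [edge_fst_of_forward Δ t ht2 w i (hw i), vert_eq_of_forward Δ t w hw i.castSucc]
        simp
      apply Sigma.ext
      · exact hfst.symm
      · exact (Fin.heq_ext_iff (congrArg (bundleSize Δ t) hfst.symm)).mpr rfl
  right_inv := by
    intro f
    funext i
    apply Fin.ext
    rfl

noncomputable def equivB (ht2 : 2 ≤ t) :
    {w : (cycleMultigraph Δ t).Walk (0 : ZMod (2*t)) (t : ZMod (2*t)) t // ¬ Fwd Δ t w} ≃
      BPi Δ t where
  toFun w := fun i => by
    have hb : ∀ i : Fin t, w.1.vert i.castSucc = w.1.vert i.succ + 1 :=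
      (forward_or_backward Δ t (by omega) w.1).resolve_left w.2
    exact Fin.cast (congrArg (bundleSize Δ t) (by
      rw [edge_fst_of_backward Δ t ht2 w.1 i (hb i),
        vert_eq_of_backward Δ t w.1 hb i.succ]
      rw [neg_rep t (by omega) (by omega : i.val < 2*t)]
      simp [Fin.val_succ])) ((w.1.edge i).2)
  invFun g := ⟨bwWalk Δ t (by omega) g, not_fwd_bwWalk Δ t ht2 g⟩
  left_inv := by
    rintro ⟨w, hw⟩
    have hb : ∀ i : Fin t, w.vert i.castSucc = w.vert i.succ + 1 :=
      (forward_or_backward Δ t (by omega) w).resolve_left hw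
    apply Subtype.ext
    apply Multigraph.Walk.ext
    · funext k
      show -((k.val : ℕ) : ZMod (2*t)) = w.vert k
      rw [vert_eq_of_backward Δ t w hb k]
      simp
    · funext i
      show (⟨((2*t - (i.val+1) : ℕ) : ZMod (2*t)), _⟩ : Σ j : ZMod (2*t), Fin (bundleSize Δ t j))
          = w.edge i
      have hfst : (w.edge i).1 = ((2*t - (i.val+1) : ℕ) : ZMod (2*t)) := by
        rw [edge_fst_of_backward Δ t ht2 w i (hb i), vert_eq_of_backward Δ t w hb i.succ]
        rw [neg_rep t (by omega) (by omega : i.val < 2*t)]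
        simp [Fin.val_succ]
      apply Sigma.ext
      · exact hfst.symm
      · exact (Fin.heq_ext_iff (congrArg (bundleSize Δ t) hfst.symm)).mpr rfl
  right_inv := by
    intro g
    funext i
    apply Fin.ext
    rfl

lemma card_walk (ht2 : 2 ≤ t) :
    Nat.card ((cycleMultigraph Δ t).Walk (0 : ZMod (2*t)) (t : ZMod (2*t)) t) =
      (∏ i : Fin t, bundleSize Δ t ((i.val : ℕ) : ZMod (2*t))) +
      (∏ i : Fin t, bundleSize Δ t ((2*t - (i.val+1) : ℕ) : ZMod (2*t))) := by
  classical
  rw [Nat.card_congr ((Equiv.sumCompl (Fwd Δ t)).symm.trans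
    (Equiv.sumCongr (equivF Δ t ht2) (equivB Δ t ht2)))]
  rw [Nat.card_sum]
  unfold FPi BPi
  rw [Nat.card_pi, Nat.card_pi]
  congr 1 <;> exact Finset.prod_congr rfl (fun i _ => by
    rw [Nat.card_eq_fintype_card, Fintype.card_fin])

lemma prodAlt (a b : ℕ) (n : ℕ) :
    ∏ i ∈ Finset.range n, (if i % 2 = 0 then a else b) = a ^ ((n+1)/2) * b ^ (n/2) := by
  induction n with
  | zero => simp
  | succ n ih =>
    rw [Finset.prod_range_succ, ih]
    by_cases h : n % 2 = 0
    · rw [if_pos h]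
      have e1 : (n+1+1)/2 = (n+1)/2 + 1 := by omega
      have e2 : (n+1)/2 = n/2 := by omega
      rw [e1, e2, pow_succ]
      ring
    · rw [if_neg h]
      have e1 : (n+1+1)/2 = (n+1)/2 := by omega
      have e2 : (n+1)/2 = n/2 + 1 := by omega
      rw [e1, e2, pow_succ]
      ring

lemma prodF (ht : 1 ≤ t) :
    ∏ i : Fin t, bundleSize Δ t ((i.val : ℕ) : ZMod (2*t)) =
      (Δ/2) ^ ((t+1)/2) * ((Δ+1)/2) ^ (t/2) := by
  haveI : NeZero (2*t) := ⟨by omega⟩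
  rw [← prodAlt (Δ/2) ((Δ+1)/2) t, ← Fin.prod_univ_eq_prod_range]
  apply Finset.prod_congr rfl
  intro i _
  unfold bundleSize
  rw [ZMod.val_cast_of_lt (by omega : i.val < 2*t)]

lemma prodB (ht : 1 ≤ t) :
    ∏ i : Fin t, bundleSize Δ t ((2*t - (i.val+1) : ℕ) : ZMod (2*t)) =
      ((Δ+1)/2) ^ ((t+1)/2) * (Δ/2) ^ (t/2) := by
  haveI : NeZero (2*t) := ⟨by omega⟩
  rw [← prodAlt ((Δ+1)/2) (Δ/2) t, ← Fin.prod_univ_eq_prod_range]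
  apply Finset.prod_congr rfl
  intro i _
  unfold bundleSize
  rw [ZMod.val_cast_of_lt (by omega : 2*t - (i.val+1) < 2*t)]
  have hpar : (2*t - (i.val+1)) % 2 = 0 ↔ ¬ (i.val % 2 = 0) := by
    constructor <;> intro h <;> omega
  by_cases h : i.val % 2 = 0
  · rw [if_pos h, if_neg (fun hc => (hpar.mp hc) h)]
  · rw [if_neg h, if_pos (by omega)]

lemma bundle_pos (hΔ : 2 ≤ Δ) (i : ZMod (2*t)) : 0 < bundleSize Δ t i := by
  unfold bundleSize
  split <;> omega

lemma dist_eq (hΔ : 2 ≤ Δ) (ht : 1 ≤ t) :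
    (cycleMultigraph Δ t).dist (0 : ZMod (2*t)) (t : ZMod (2*t)) = t := by
  have wex : Nonempty ((cycleMultigraph Δ t).Walk (0 : ZMod (2*t)) (t : ZMod (2*t)) t) :=
    ⟨fwWalk Δ t (fun i => ⟨0, bundle_pos Δ t hΔ _⟩)⟩
  apply le_antisymm
  · exact Nat.sInf_le wex
  · exact le_csInf ⟨t, wex⟩ (fun n hn => walk_length_ge Δ t ht hn.some)

lemma numShortest_zero
    (h : ∀ n, IsEmpty ((cycleMultigraph Δ t).Walk (0 : ZMod (2*t)) (t : ZMod (2*t)) n)) :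
    (cycleMultigraph Δ t).numShortestPaths (0 : ZMod (2*t)) (t : ZMod (2*t)) = 0 := by
  unfold Multigraph.numShortestPaths
  haveI := h ((cycleMultigraph Δ t).dist (0 : ZMod (2*t)) (t : ZMod (2*t)))
  exact Nat.card_of_isEmpty

lemma isEmpty_walk0 (ht : 1 ≤ t) (n : ℕ) :
    IsEmpty ((cycleMultigraph 0 t).Walk (0 : ZMod (2*t)) (t : ZMod (2*t)) n) := by
  haveI : NeZero (2*t) := ⟨by omega⟩
  constructor
  intro w
  match n, w with
  | 0, w =>
    have h0 := w.vert_zero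
    rw [Subsingleton.elim (0 : Fin 1) (Fin.last 0), w.vert_last] at h0
    have := congrArg ZMod.val h0
    rw [ZMod.val_cast_of_lt (by omega), ZMod.val_zero] at this
    omega
  | n+1, w =>
    have hlt := (w.edge ⟨0, by omega⟩).2.isLt
    have hz : bundleSize 0 t ((w.edge ⟨0, by omega⟩).1) = 0 := by
      unfold bundleSize; split <;> rfl
    omega

lemma isEmpty_walk1 (ht2 : 2 ≤ t) (n : ℕ) :
    IsEmpty ((cycleMultigraph 1 t).Walk (0 : ZMod (2*t)) (t : ZMod (2*t)) n) := by
  haveI : NeZero (2*t) := ⟨by omega⟩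
  constructor
  intro w
  have hm1 : ((2*t - 1 : ℕ) : ZMod (2*t)) = -1 := by
    have := neg_rep t (by omega) (i := 0) (by omega)
    norm_num at this
    convert this using 2
  have conf : ∀ j : ℕ, ∀ hj : j < n + 1, w.vert ⟨j, hj⟩ = 0 ∨ w.vert ⟨j, hj⟩ = -1 := by
    intro j
    induction j with
    | zero =>
      intro hj
      left
      have h0 : (⟨0, hj⟩ : Fin (n+1)) = 0 := by ext; simp
      rw [h0, w.vert_zero]
    | succ j ih =>
      intro hj
      have hjn : j < n := by omega
      set i : Fin n := ⟨j, hjn⟩ with hi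
      have hcs : i.castSucc = (⟨j, by omega⟩ : Fin (n+1)) := by ext; simp [hi]
      have hsucc : i.succ = (⟨j+1, hj⟩ : Fin (n+1)) := by ext; simp [hi]
      have hodd : ((w.edge i).1).val % 2 = 1 := by
        have hlt := (w.edge i).2.isLt
        by_contra hpar
        have hpar' : ((w.edge i).1).val % 2 = 0 := by omega
        unfold bundleSize at hlt
        split at hlt
        · omega
        · next hcond => exact hcond hpar' 
      have ihc := ih (by omega)
      rw [← hcs] at ihc
      rcases step_cases 1 t w i with ⟨hf, he⟩ | ⟨hb, he⟩
      · rcases ihc with h0 | h1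
        · exfalso
          rw [he, h0] at hodd
          rw [ZMod.val_zero] at hodd
          omega
        · left
          rw [← hsucc, hf, h1]
          ring
      · rcases ihc with h0 | h1
        · right
          rw [← hsucc]
          have hvs : w.vert i.succ = w.vert i.castSucc - 1 := by rw [hb]; ring
          rw [hvs, h0]
          ring
        · exfalso
          have hvs : w.vert i.succ = -2 := by
            have hvs' : w.vert i.succ = w.vert i.castSucc - 1 := by rw [hb]; ring
            rw [hvs', h1]; ring
          rw [he, hvs] at hodd
          have hm2 : ((2*t - 2 : ℕ) : ZMod (2*t)) = -2 := by
            have := neg_rep t (by omega) (i := 1) (by omega)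
            norm_num at this
            convert this using 2
          rw [← hm2, ZMod.val_cast_of_lt (by omega)] at hodd
          omega
  have hlast := conf n (by omega)
  have hl : (⟨n, by omega⟩ : Fin (n+1)) = Fin.last n := by ext; simp
  rw [hl, w.vert_last] at hlast
  rcases hlast with h | h
  · have := congrArg ZMod.val h
    rw [ZMod.val_cast_of_lt (by omega), ZMod.val_zero] at this
    omega
  · rw [← hm1] at h
    have := congrArg ZMod.val h
    rw [ZMod.val_cast_of_lt (by omega), ZMod.val_cast_of_lt (by omega)] at this
    omega

lemma ends_one (Δ : ℕ) (e : (Σ i : ZMod (2*1), Fin (bundleSize Δ 1 i))) :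
    (cycleMultigraph Δ 1).ends e = s((0 : ZMod (2*1)), ((1:ℕ) : ZMod (2*1))) := by
  show s(e.1, e.1 + 1) = _
  have h : ∀ c : ZMod (2*1), s(c, c+1) = s((0 : ZMod (2*1)), ((1:ℕ) : ZMod (2*1))) := by
    decide
  exact h e.1

def mkW1 (Δ : ℕ) (e : (Σ i : ZMod (2*1), Fin (bundleSize Δ 1 i))) :
    (cycleMultigraph Δ 1).Walk (0 : ZMod (2*1)) ((1:ℕ) : ZMod (2*1)) 1 where
  vert k := ((k.val : ℕ) : ZMod (2*1))
  edge _ := e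
  vert_zero := by simp
  vert_last := by simp
  ends_eq i := by
    rw [ends_one Δ e]
    have h0 : i.castSucc = (0 : Fin 2) := by
      ext; simp [Fin.coe_castSucc]
    have h1 : i.succ = (1 : Fin 2) := by
      ext; simp [Fin.val_succ]
    rw [h0, h1]
    norm_num

lemma t_one (Δ : ℕ) (hΔ : 1 ≤ Δ) :
    (cycleMultigraph Δ 1).numShortestPaths (0 : ZMod (2*1)) ((1 : ℕ) : ZMod (2*1)) =
      Δ/2 + (Δ+1)/2 := by
  have hcard : Nat.card ((cycleMultigraph Δ 1).Walk (0 : ZMod (2*1)) ((1:ℕ) : ZMod (2*1)) 1)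
      = Nat.card (Σ i : ZMod (2*1), Fin (bundleSize Δ 1 i)) := by
    apply Nat.card_congr
    refine ⟨fun w => w.edge 0, mkW1 Δ, ?_, ?_⟩
    · intro w
      apply Multigraph.Walk.ext
      · funext k
        show ((k.val : ℕ) : ZMod (2*1)) = w.vert k
        have hk : k = 0 ∨ k = Fin.last 1 := by
          rcases k with ⟨kv, hkv⟩
          interval_cases kv
          · left; rfl
          · right; rfl
        rcases hk with h | h
        · rw [h, w.vert_zero]; simp
        · rw [h, w.vert_last]; simp
      · funext i
        rw [Subsingleton.elim i 0]
        rfl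
    · intro e; rfl
  have epos : 0 < bundleSize Δ 1 (((1:ℕ)) : ZMod (2*1)) := by
    unfold bundleSize
    rw [if_neg (by decide)]
    omega
  have wex : Nonempty ((cycleMultigraph Δ 1).Walk (0 : ZMod (2*1)) ((1:ℕ) : ZMod (2*1)) 1) :=
    ⟨mkW1 Δ ⟨((1:ℕ) : ZMod (2*1)), ⟨0, epos⟩⟩⟩
  have hne : ((1:ℕ) : ZMod (2*1)) ≠ (0 : ZMod (2*1)) := by decide
  have hdist : (cycleMultigraph Δ 1).dist (0 : ZMod (2*1)) ((1:ℕ) : ZMod (2*1)) = 1 := by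
    apply le_antisymm
    · exact Nat.sInf_le wex
    · have hmem : (cycleMultigraph Δ 1).dist (0 : ZMod (2*1)) ((1:ℕ) : ZMod (2*1)) ∈
          {n | Nonempty ((cycleMultigraph Δ 1).Walk (0 : ZMod (2*1)) ((1:ℕ) : ZMod (2*1)) n)} :=
        Nat.sInf_mem ⟨1, wex⟩
      rcases Nat.eq_zero_or_pos ((cycleMultigraph Δ 1).dist (0 : ZMod (2*1)) ((1:ℕ) : ZMod (2*1)))
        with h0 | h1
      · exfalso
        rw [h0] at hmem
        obtain ⟨w⟩ := hmem
        have hz := w.vert_zero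
        rw [Subsingleton.elim (0 : Fin 1) (Fin.last 0), w.vert_last] at hz
        exact hne hz
      · exact h1
  unfold Multigraph.numShortestPaths
  rw [hdist, hcard, Nat.card_eq_fintype_card, Fintype.card_sigma]
  have huniv : (Finset.univ : Finset (ZMod (2*1))) = {0, 1} := by decide
  rw [huniv, Finset.sum_insert (by decide), Finset.sum_singleton]
  have h0 : bundleSize Δ 1 (0 : ZMod (2*1)) = Δ/2 := by
    unfold bundleSize; norm_num
  have h1 : bundleSize Δ 1 (1 : ZMod (2*1)) = (Δ+1)/2 := by
    unfold bundleSize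
    rw [if_neg (by decide)]
  simp [h0, h1]

end CycleAux

theorem cycleMultigraph_numShortestPaths (Δ t : ℕ) (ht : 1 ≤ t) :
    (cycleMultigraph Δ t).numShortestPaths (0 : ZMod (2 * t)) (t : ZMod (2 * t)) =
      if Even t then 2 * ((Δ / 2) * ((Δ + 1) / 2)) ^ (t / 2)
      else ((Δ / 2) + ((Δ + 1) / 2)) * ((Δ / 2) * ((Δ + 1) / 2)) ^ ((t - 1) / 2) := by
  rcases Nat.lt_or_ge Δ 2 with hΔ | hΔ
  · interval_cases Δ
    · rw [CycleAux.numShortest_zero 0 t (CycleAux.isEmpty_walk0 t ht)]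
      by_cases he : Even t
      · rw [if_pos he]
        have h2 : t / 2 ≠ 0 := by
          have := Nat.even_iff.mp he; omega
        simp [h2]
      · rw [if_neg he]
        simp
    · rcases Nat.lt_or_ge t 2 with ht2 | ht2
      · have h1 : t = 1 := by omega
        subst h1
        rw [CycleAux.t_one 1 (by omega)]
        rw [if_neg (by decide)]
        norm_num
      · rw [CycleAux.numShortest_zero 1 t (CycleAux.isEmpty_walk1 t ht2)]
        by_cases he : Even t
        · rw [if_pos he]
          have h2 : t / 2 ≠ 0 := by
            have := Nat.even_iff.mp he; omega
          simp [h2]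
        · rw [if_neg he]
          have h2 : (t-1) / 2 ≠ 0 := by
            have := Nat.odd_iff.mp (Nat.not_even_iff_odd.mp he); omega
          simp [h2]
  · rcases Nat.lt_or_ge t 2 with ht2 | ht2
    · have h1 : t = 1 := by omega
      subst h1
      rw [CycleAux.t_one Δ (by omega)]
      rw [if_neg (by decide)]
      norm_num
    · unfold Multigraph.numShortestPaths
      rw [CycleAux.dist_eq Δ t hΔ ht, CycleAux.card_walk Δ t ht2,
        CycleAux.prodF Δ t ht, CycleAux.prodB Δ t ht]
      by_cases he : Even t
      · rw [if_pos he]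
        have e1 : (t+1)/2 = t/2 := by
          have := Nat.even_iff.mp he; omega
        rw [e1, mul_pow]
        ring
      · rw [if_neg he]
        have hodd := Nat.odd_iff.mp (Nat.not_even_iff_odd.mp he)
        have e1 : (t+1)/2 = (t-1)/2 + 1 := by omega
        have e2 : t/2 = (t-1)/2 := by omega
        rw [e1, e2, pow_succ, pow_succ, mul_pow]
        ring
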